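/- Let N ≥ 1, R ≥ 1, k ≥ 1 and let g : Fin R → Perm(Fin N) be a tuple of permutations. For v ∈ Fin N let L(v) = { g_w(v) : w ∈ (Fin R)^k } be the set of endpoints of all length-k relation paths starting at v. Then there exists a subset S ⊆ Fin N with |S| ≥ ⌊N / (2·R^(2k))⌋ such that the sets L(u), u ∈ S, are pairwise disjoint. -/

import Mathlib

/-- For a tuple of permutations `g : Fin R → Perm (Fin N)` and a word
`w = (w_1, …, w_k) ∈ (Fin R)^k`, `wordComp g w` is the composition
`g_{w_k} ∘ ⋯ ∘ g_{w_1}` (with `g_{w_1}` applied first). -/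
def wordComp {N R : ℕ} (g : Fin R → Equiv.Perm (Fin N)) {k : ℕ}
    (w : Fin k → Fin R) : Equiv.Perm (Fin N) :=
  (List.ofFn w).foldl (fun σ r => g r * σ) 1

/-- Greedy extraction lemma: from any finset `T` we can extract `S ⊆ T`
with `T.card ≤ S.card * R^(2k)` and pairwise disjoint leaf sets. -/
lemma greedy_extract (N R k : ℕ) (hR : 1 ≤ R)
    (g : Fin R → Equiv.Perm (Fin N)) :
    ∀ n : ℕ, ∀ T : Finset (Fin N), T.card ≤ n →
      ∃ S : Finset (Fin N), S ⊆ T ∧ T.card ≤ S.card * R ^ (2 * k) ∧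
        ∀ u ∈ S, ∀ u' ∈ S, u ≠ u' →
          Disjoint
            (Finset.image (fun w : Fin k → Fin R => wordComp g w u) Finset.univ)
            (Finset.image (fun w : Fin k → Fin R => wordComp g w u') Finset.univ) := by
  set L : Fin N → Finset (Fin N) :=
    fun v => Finset.image (fun w : Fin k → Fin R => wordComp g w v) Finset.univ with hL
  intro n
  induction n with
  | zero =>
    intro T hT
    refine ⟨∅, Finset.empty_subset _, ?_, by simp⟩
    simpa using Nat.le_of_lt_succ (Nat.lt_succ_of_le hT)
  | succ n ih =>
    intro T hT
    rcases T.eq_empty_or_nonempty with rfl | ⟨v, hv⟩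
    · exact ⟨∅, Finset.Subset.refl _, by simp, by simp⟩
    · -- conflict set of v inside T
      set C : Finset (Fin N) := T.filter (fun u => ¬ Disjoint (L u) (L v)) with hC
      have hCsub : C ⊆ Finset.image
          (fun p : (Fin k → Fin R) × (Fin k → Fin R) =>
            (wordComp g p.1).symm (wordComp g p.2 v)) Finset.univ := by
        intro u hu
        rw [hC, Finset.mem_filter] at hu
        obtain ⟨-, hnd⟩ := hu
        rw [Finset.not_disjoint_iff] at hnd
        obtain ⟨x, hx1, hx2⟩ := hnd
        rw [hL] at hx1 hx2
        simp only [Finset.mem_image, Finset.mem_univ, true_and] at hx1 hx2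
        obtain ⟨w, hw⟩ := hx1
        obtain ⟨w', hw'⟩ := hx2
        simp only [Finset.mem_image, Finset.mem_univ, true_and]
        refine ⟨(w, w'), ?_⟩
        simp only
        rw [hw', ← hw, Equiv.symm_apply_apply]
      have hCcard : C.card ≤ R ^ (2 * k) := by
        calc C.card ≤ _ := Finset.card_le_card hCsub
          _ ≤ Finset.univ.card := Finset.card_image_le
          _ = R ^ (2 * k) := by
            simp [Fintype.card_prod, Fintype.card_fun, two_mul, pow_add]
      have hvC : v ∈ C := by
        rw [hC, Finset.mem_filter]
        refine ⟨hv, ?_⟩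
        rw [Finset.not_disjoint_iff]
        have : ∃ x, x ∈ L v := by
          rw [hL]
          have : Nonempty (Fin k → Fin R) := ⟨fun _ => ⟨0, hR⟩⟩
          obtain ⟨w⟩ := this
          exact ⟨wordComp g w v, Finset.mem_image.2 ⟨w, Finset.mem_univ _, rfl⟩⟩
        obtain ⟨x, hx⟩ := this
        exact ⟨x, hx, hx⟩
      set T' := T \ C with hT'
      have hT'lt : T'.card < T.card :=
        Finset.card_lt_card (Finset.sdiff_ssubset (by
          intro u hu; exact (Finset.mem_filter.1 hu).1) ⟨v, hvC⟩)
      obtain ⟨S', hS'sub, hS'card, hS'disj⟩ := ih T' (by omega)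
      have hvS' : v ∉ S' := fun h => by
        have := hS'sub h
        rw [hT', Finset.mem_sdiff] at this
        exact this.2 hvC
      refine ⟨insert v S', ?_, ?_, ?_⟩
      · intro u hu
        rcases Finset.mem_insert.1 hu with rfl | hu
        · exact hv
        · exact (Finset.mem_sdiff.1 (hS'sub hu)).1
      · rw [Finset.card_insert_of_notMem hvS', add_mul, one_mul]
        have hCT : C ⊆ T := Finset.filter_subset _ _
        have hsplit : T'.card + C.card = T.card := by
          rw [hT']; exact Finset.card_sdiff_add_card_eq_card hCT
        omega
      · intro u hu u' hu' hne
        have key : ∀ w, w ∈ S' → Disjoint (L w) (L v) := by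
          intro w hw
          have hw' : w ∈ T' := hS'sub hw
          rw [hT', Finset.mem_sdiff] at hw'
          by_contra h
          exact hw'.2 (Finset.mem_filter.2 ⟨hw'.1, h⟩)
        rcases Finset.mem_insert.1 hu with rfl | hu2
        · rcases Finset.mem_insert.1 hu' with rfl | hu2'
          · exact absurd rfl hne
          · exact (key u' hu2').symm
        · rcases Finset.mem_insert.1 hu' with rfl | hu2'
          · exact key u hu2
          · exact hS'disj u hu2 u' hu2' hne

/-- **Greedy extraction of disjoint evaluation trees.** For `N, R ≥ 1`,
`k ≥ 1` and any tuple of permutations `g : Fin R → Perm (Fin N)`, letting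
`L v = { g_w(v) : w ∈ (Fin R)^k }` be the endpoints of all length-`k` relation
paths from `v`, there is a subset `S` of the vertices with
`|S| ≥ ⌊N / (2·R^(2k))⌋` whose evaluation-leaf sets `L u`, `u ∈ S`, are
pairwise disjoint. -/
theorem disjoint_khop_trees (N R k : ℕ) (hN : 1 ≤ N) (hR : 1 ≤ R) (hk : 1 ≤ k)
    (g : Fin R → Equiv.Perm (Fin N)) :
    ∃ S : Finset (Fin N), N / (2 * R ^ (2 * k)) ≤ S.card ∧
      ∀ u ∈ S, ∀ u' ∈ S, u ≠ u' →
        Disjoint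
          (Finset.image (fun w : Fin k → Fin R => wordComp g w u) Finset.univ)
          (Finset.image (fun w : Fin k → Fin R => wordComp g w u') Finset.univ) := by
  obtain ⟨S, -, hcard, hdisj⟩ :=
    greedy_extract N R k hR g (Finset.univ : Finset (Fin N)).card Finset.univ le_rfl
  refine ⟨S, ?_, hdisj⟩
  have hNcard : (Finset.univ : Finset (Fin N)).card = N := by simp
  rw [hNcard] at hcard
  have hpos : 0 < R ^ (2 * k) := Nat.pow_pos hR
  have h1 : N / (2 * R ^ (2 * k)) ≤ N / R ^ (2 * k) :=
    Nat.div_le_div_left (by omega) hpos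
  have h2 : N / R ^ (2 * k) ≤ S.card :=
    Nat.div_le_of_le_mul (hcard.trans_eq (mul_comm _ _))
  exact h1.trans h2
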